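/- Let k : Fin n → Fin n → ℝ with k i j ≥ 0 for i ≠ j (k i j is the rate constant of A_j → A_i). The following are equivalent: (A) there exist sequences k^{(m)} i j > 0 (m ∈ ℕ, i ≠ j) with k^{(m)} i j → k i j as m → ∞ such that for every m there exists p^{(m)} ∈ ℝ^n with p^{(m)}_i > 0 for all i and k^{(m)} i j * p^{(m)}_j = k^{(m)} j i * p^{(m)}_i for all i ≠ j; (B) for every oriented cycle, i.e. every finite sequence of indices i_1, …, i_q (with the cyclic convention i_{q+1} = i_1) such that k i_{j+1} i_j > 0 for all j = 1,…,q, one has k i_j i_{j+1} > 0 for all j and ∏_{j=1}^q k i_{j+1} i_j = ∏_{j=1}^q k i_j i_{j+1}. -/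

import Mathlib

open Filter Finset

namespace LimDB

variable {n : ℕ}

/-- `stepR k a b` : the transition `a → b` has positive rate constant `k b a`. -/
def stepR (k : Fin n → Fin n → ℝ) (a b : Fin n) : Prop := 0 < k b a

/-- Condition (B): extended detailed balance. -/
def condB (k : Fin n → Fin n → ℝ) : Prop :=
  ∀ q : ℕ, ∀ idx : Fin (q + 1) → Fin n,
    (∀ j : Fin (q + 1), 0 < k (idx (j + 1)) (idx j)) →
    (∀ j : Fin (q + 1), 0 < k (idx j) (idx (j + 1))) ∧
      ∏ j : Fin (q + 1), k (idx (j + 1)) (idx j)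
        = ∏ j : Fin (q + 1), k (idx j) (idx (j + 1))

/-- Chain product of `f next cur` over consecutive pairs of a list. -/
def cp' (f : Fin n → Fin n → ℝ) : List (Fin n) → ℝ
  | [] => 1
  | [_] => 1
  | a :: b :: t => f b a * cp' f (b :: t)

lemma cp'_pos {f : Fin n → Fin n → ℝ} : ∀ {l : List (Fin n)},
    List.Chain' (fun u v => 0 < f v u) l → 0 < cp' f l
  | [], _ => one_pos
  | [_], _ => one_pos
  | _ :: b :: t, h => by
      simp only [List.Chain', List.isChain_cons_cons] at h
      exact mul_pos h.1 (cp'_pos h.2)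

lemma cp'_append (f : Fin n → Fin n → ℝ) :
    ∀ (l₁ l₂ : List (Fin n)) (h₁ : l₁ ≠ []) (h₂ : l₂ ≠ []),
    cp' f (l₁ ++ l₂) = cp' f l₁ * f (l₂.head h₂) (l₁.getLast h₁) * cp' f l₂
  | [], _, h₁, _ => absurd rfl h₁
  | [a], l₂, _, h₂ => by
      cases l₂ with
      | nil => exact absurd rfl h₂
      | cons b t => simp [cp']
  | a :: c :: t, l₂, _, h₂ => by
      have ih := cp'_append f (c :: t) l₂ (by simp) h₂
      have h3 : (a :: c :: t) ++ l₂ = a :: ((c :: t) ++ l₂) := by simp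
      rw [h3]
      have h4 : cp' f (a :: ((c :: t) ++ l₂)) = f c a * cp' f ((c :: t) ++ l₂) := by
        simp [cp']
      rw [h4, ih, List.getLast_cons (by simp : (c :: t) ≠ [])]
      show f c a * _ = f c a * cp' f (c :: t) * _ * _
      ring

lemma cp'_reverse (f : Fin n → Fin n → ℝ) :
    ∀ l : List (Fin n), cp' f l.reverse = cp' (flip f) l
  | [] => rfl
  | [a] => rfl
  | a :: b :: t => by
      have h1 : (a :: b :: t).reverse = (b :: t).reverse ++ [a] := by simp
      rw [h1, cp'_append f _ [a] (by simp) (by simp), cp'_reverse f (b :: t)]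
      have h2 : ((b :: t).reverse).getLast (by simp) = b := by
        rw [List.getLast_reverse]; rfl
      rw [h2]
      show cp' (flip f) (b :: t) * f a b * 1 = cp' (flip f) (a :: b :: t)
      have : cp' (flip f) (a :: b :: t) = flip f b a * cp' (flip f) (b :: t) := rfl
      rw [this]
      show cp' (flip f) (b :: t) * f a b * 1 = f a b * cp' (flip f) (b :: t)
      ring

/-- the vertex list of a cycle, as a function `Fin (length) → Fin n` -/
def vtx (x : Fin n) (xs : List (Fin n)) (j : Fin (xs.length + 1)) : Fin n :=
  (x :: xs).getD (j : ℕ) x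

lemma vtx_add_one (x : Fin n) (xs : List (Fin n)) (j : Fin (xs.length + 1)) :
    vtx x xs (j + 1) = (x :: xs).getD ((j : ℕ) + 1) x := by
  by_cases hj : (j : ℕ) + 1 < xs.length + 1
  · have hv : ((j + 1 : Fin (xs.length + 1)) : ℕ) = (j : ℕ) + 1 :=
      Fin.val_add_one_of_lt (by rw [Fin.lt_def]; simpa using hj)
    rw [vtx, hv]
  · have hv : (j : ℕ) = xs.length := by omega
    have hlast : j = Fin.last _ := Fin.ext hv
    rw [hlast, Fin.last_add_one]
    rw [List.getD_eq_default _ _ (by simp [hv])]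
    rfl

lemma cp_fin (f : Fin n → Fin n → ℝ) :
    ∀ (xs : List (Fin n)) (x w : Fin n),
    (∏ j : Fin (xs.length + 1), f ((x :: xs).getD ((j : ℕ) + 1) w) (vtx x xs j))
      = cp' f (x :: xs) * f w ((x :: xs).getLast (List.cons_ne_nil x xs))
  | [], x, w => by
      simp [cp', vtx]
  | y :: t, x, w => by
      rw [Fin.prod_univ_succ]
      simp only [List.length_cons]
      have h0 : f ((x :: y :: t).getD (((0 : Fin (t.length + 1 + 1)) : ℕ) + 1) w)
          (vtx x (y :: t) 0) = f y x := by
        simp [vtx]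
      have htail : ∀ i : Fin (t.length + 1),
          f ((x :: y :: t).getD ((i.succ : ℕ) + 1) w) (vtx x (y :: t) i.succ)
            = f ((y :: t).getD ((i : ℕ) + 1) w) (vtx y t i) := by
        intro i
        have hi : (i : ℕ) < (y :: t).length := by simp; omega
        have h1 : ((i.succ : ℕ)) = (i : ℕ) + 1 := rfl
        have h2 : vtx x (y :: t) i.succ = vtx y t i := by
          show (x :: y :: t).getD ((i.succ : ℕ)) x = (y :: t).getD ((i : ℕ)) y
          rw [h1, List.getD_cons_succ, List.getD_eq_getElem _ _ hi,
            List.getD_eq_getElem _ _ hi]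
        rw [h2, h1, List.getD_cons_succ]
      rw [Finset.prod_congr rfl (fun i _ => htail i), cp_fin f t y w, h0]
      have hgl : (x :: y :: t).getLast (List.cons_ne_nil _ _)
          = (y :: t).getLast (List.cons_ne_nil _ _) := List.getLast_cons (by simp)
      rw [hgl]
      have hcp : cp' f (x :: y :: t) = f y x * cp' f (y :: t) := rfl
      rw [hcp]; ring

lemma cyc_eq (f : Fin n → Fin n → ℝ) (x : Fin n) (xs : List (Fin n)) :
    (∏ j : Fin (xs.length + 1), f (vtx x xs (j + 1)) (vtx x xs j))
      = cp' f (x :: xs) * f x ((x :: xs).getLast (List.cons_ne_nil x xs)) := by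
  rw [← cp_fin f xs x x]
  exact Finset.prod_congr rfl fun j _ => by rw [vtx_add_one]

lemma vtx_zero (x : Fin n) (xs : List (Fin n)) : vtx x xs 0 = x := by simp [vtx]

lemma vtx_last (x : Fin n) (xs : List (Fin n)) :
    vtx x xs (Fin.last _) = (x :: xs).getLast (List.cons_ne_nil x xs) := by
  rw [vtx, List.getLast_eq_getElem, List.getD_eq_getElem _ _ (by simp)]
  simp

lemma vtx_eq_get (x : Fin n) (xs : List (Fin n)) (i : ℕ) (hi : i < xs.length + 1) :
    vtx x xs ⟨i, hi⟩ = (x :: xs).get ⟨i, by simpa using hi⟩ := by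
  rw [vtx, List.get_eq_getElem, List.getD_eq_getElem _ _ (by simpa using hi)]


lemma BC (k : Fin n → Fin n → ℝ) (hB : condB k) (x : Fin n) (xs : List (Fin n))
    (hch : List.Chain' (stepR k) (x :: xs))
    (hcl : 0 < k x ((x :: xs).getLast (List.cons_ne_nil x xs))) :
    List.Chain' (fun u v => 0 < k u v) (x :: xs) ∧
    0 < k ((x :: xs).getLast (List.cons_ne_nil x xs)) x ∧
    cp' k (x :: xs) * k x ((x :: xs).getLast (List.cons_ne_nil x xs)) =
      cp' (flip k) (x :: xs) * k ((x :: xs).getLast (List.cons_ne_nil x xs)) x := by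
  have hpos : ∀ j : Fin (xs.length + 1), 0 < k (vtx x xs (j + 1)) (vtx x xs j) := by
    intro j
    rcases lt_or_ge ((j : ℕ) + 1) (xs.length + 1) with hj | hj
    · have hj' : (j : ℕ) < (x :: xs).length - 1 := by simpa using hj
      have hc := List.isChain_iff_getElem.mp hch (j : ℕ) (by simpa using hj)
      have e1 : vtx x xs j = (x :: xs).get ⟨(j : ℕ), by simpa using j.isLt⟩ := by
        have := vtx_eq_get x xs (j : ℕ) j.isLt
        simpa using this
      have e2 : vtx x xs (j + 1) = (x :: xs).get ⟨(j : ℕ) + 1, by simpa using hj⟩ := by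
        rw [vtx_add_one]
        have := vtx_eq_get x xs ((j : ℕ) + 1) hj
        rw [← this]
        rfl
      rw [e1, e2]
      exact hc
    · have hj' : j = Fin.last _ := Fin.ext (by have := j.isLt; simp only [Fin.val_last]; omega)
      rw [hj', Fin.last_add_one, vtx_zero, vtx_last]
      exact hcl
  obtain ⟨h1, h2⟩ := hB xs.length (vtx x xs) hpos
  refine ⟨?_, ?_, ?_⟩
  · apply List.isChain_iff_getElem.mpr
    intro i hi
    have hi' : i + 1 < xs.length + 1 := by simpa using hi
    have h := h1 ⟨i, by omega⟩
    have e1 : vtx x xs ⟨i, by omega⟩ = (x :: xs).get ⟨i, by simp; omega⟩ :=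
      vtx_eq_get x xs i (by omega)
    have e2 : vtx x xs ((⟨i, by omega⟩ : Fin (xs.length + 1)) + 1)
        = (x :: xs).get ⟨i + 1, by simpa using hi'⟩ := by
      rw [vtx_add_one]
      have := vtx_eq_get x xs (i + 1) hi'
      rw [← this]
      rfl
    rw [e1, e2] at h
    exact h
  · have h := h1 (Fin.last _)
    rw [Fin.last_add_one, vtx_zero, vtx_last] at h
    exact h
  · have e := h2
    rw [cyc_eq k x xs] at e
    have e3 : ∏ j : Fin (xs.length + 1), k (vtx x xs j) (vtx x xs (j + 1))
        = ∏ j : Fin (xs.length + 1), (flip k) (vtx x xs (j + 1)) (vtx x xs j) :=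
      Finset.prod_congr rfl fun j _ => rfl
    rw [e3, cyc_eq (flip k) x xs] at e
    exact e

lemma head_congr' {l₁ l₂ : List (Fin n)} (h : l₁ = l₂) (h₁ : l₁ ≠ []) (h₂ : l₂ ≠ []) :
    l₁.head h₁ = l₂.head h₂ := by subst h; rfl

lemma head_append_left {l₁ l₂ : List (Fin n)} (h : l₁ ≠ []) (hh : l₁ ++ l₂ ≠ []) :
    (l₁ ++ l₂).head hh = l₁.head h := by
  cases l₁ with
  | nil => exact absurd rfl h
  | cons a t => rfl

lemma loop (k : Fin n → Fin n → ℝ) (hB : condB k) (x : Fin n) (l : List (Fin n))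
    (hch : List.Chain' (stepR k) (x :: l))
    (hl : (x :: l).getLast (List.cons_ne_nil x l) = x) :
    List.Chain' (fun u v => 0 < k u v) (x :: l) := by
  cases l with
  | nil => exact List.isChain_singleton x
  | cons y t =>
    have h0 := List.dropLast_append_getLast (l := x :: y :: t) (List.cons_ne_nil _ _)
    rw [hl] at h0
    have hdl : (x :: y :: t).dropLast = x :: (y :: t).dropLast := rfl
    rw [hdl] at h0
    -- h0 : (x :: (y :: t).dropLast) ++ [x] = x :: y :: t
    have hchD : List.Chain' (stepR k) (x :: (y :: t).dropLast) := by
      have := hch.prefix (List.dropLast_prefix (x :: y :: t))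
      rwa [hdl] at this
    have hjun : 0 < k x ((x :: (y :: t).dropLast).getLast (List.cons_ne_nil _ _)) := by
      have hc := hch
      rw [← h0] at hc
      have h3 := (List.isChain_append.mp hc).2.2
      exact h3 ((x :: (y :: t).dropLast).getLast (List.cons_ne_nil _ _))
        (by rw [List.getLast?_eq_getLast (List.cons_ne_nil _ _)]; rfl) x rfl
    obtain ⟨c1, c2, _⟩ := BC k hB x ((y :: t).dropLast) hchD hjun
    rw [← h0]
    apply List.isChain_append.mpr
    refine ⟨c1, List.isChain_singleton x, ?_⟩
    intro a ha c hc
    simp only [List.head?_cons, Option.mem_def, Option.some.injEq] at hc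
    subst hc
    rw [List.getLast?_eq_getLast (List.cons_ne_nil _ _), Option.mem_def,
      Option.some.injEq] at ha
    subst ha
    exact c2

lemma rev_path (k : Fin n → Fin n → ℝ) (hB : condB k) {x b : Fin n} {l : List (Fin n)}
    (hch : List.Chain (stepR k) x l)
    (hlast : (x :: l).getLast (List.cons_ne_nil x l) = b)
    (hreach : Relation.ReflTransGen (stepR k) b x) :
    List.Chain' (fun u v => 0 < k u v) (x :: l) := by
  obtain ⟨m, hm, hm2⟩ := List.exists_isChain_cons_of_relationReflTransGen hreach
  have hch2 : List.Chain' (stepR k) ((x :: l) ++ m) := by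
    apply List.isChain_append.mpr
    refine ⟨hch, (show List.Chain' (stepR k) (b :: m) from hm).tail, ?_⟩
    intro a ha c hc
    cases m with
    | nil => simp at hc
    | cons c0 t0 =>
      simp only [List.head?_cons, Option.mem_def, Option.some.injEq] at hc
      subst hc
      rw [List.getLast?_eq_getLast (List.cons_ne_nil _ _), Option.mem_def,
        Option.some.injEq] at ha
      subst ha
      show stepR k ((x :: l).getLast _) c0
      rw [hlast]
      exact (List.isChain_cons_cons.mp hm).1
  have hlast2 : ((x :: l) ++ m).getLast (by simp) = x := by
    cases m with
    | nil =>
      have hbx : b = x := by simpa using hm2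
      have : (x :: l) ++ ([] : List (Fin n)) = x :: l := by simp
      rw [List.getLast_congr (by simp) (List.cons_ne_nil _ _) this, hlast, hbx]
    | cons c0 t0 =>
      rw [List.getLast_append_of_ne_nil _ (List.cons_ne_nil _ _)]
      have : (c0 :: t0).getLast (List.cons_ne_nil _ _) = (b :: c0 :: t0).getLast (List.cons_ne_nil _ _) :=
        (List.getLast_cons (List.cons_ne_nil _ _)).symm
      rw [this, hm2]
  have hloop := loop k hB x (l ++ m) (by simpa using hch2) (by
    have : (x :: l) ++ m = x :: (l ++ m) := by simp
    rw [← List.getLast_congr (by simp) _ this, hlast2])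
  exact hloop.prefix ⟨m, by simp⟩

lemma no_irrev_cycle (k : Fin n → Fin n → ℝ) (hB : condB k) {i j : Fin n}
    (hreach : Relation.ReflTransGen (stepR k) i j) (hij : 0 < k i j) : 0 < k j i := by
  obtain ⟨l, hl, hl2⟩ := List.exists_isChain_cons_of_relationReflTransGen hreach
  have hch2 : List.Chain' (stepR k) ((i :: l) ++ [i]) := by
    apply List.isChain_append.mpr
    refine ⟨hl, List.isChain_singleton i, ?_⟩
    intro a ha c hc
    simp only [List.head?_cons, Option.mem_def, Option.some.injEq] at hc
    subst hc
    rw [List.getLast?_eq_getLast (List.cons_ne_nil _ _), Option.mem_def,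
      Option.some.injEq] at ha
    subst ha
    show stepR k ((i :: l).getLast _) i
    rw [hl2]
    exact hij
  have hlast2 : ((i :: l) ++ [i]).getLast (by simp) = i := by
    rw [List.getLast_append_of_ne_nil _ (List.cons_ne_nil _ _)]
    rfl
  have hloop := loop k hB i (l ++ [i]) (by simpa using hch2) (by
    have : (i :: l) ++ [i] = i :: (l ++ [i]) := by simp
    rw [← List.getLast_congr (by simp) _ this, hlast2])
  have hrl : List.Chain' (fun u v => 0 < k u v) ((i :: l) ++ [i]) := by simpa using hloop
  have h3 := (List.isChain_append.mp hrl).2.2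
  have h4 := h3 ((i :: l).getLast (List.cons_ne_nil _ _))
    (by rw [List.getLast?_eq_getLast (List.cons_ne_nil _ _)]; rfl) i rfl
  rwa [hl2] at h4

lemma key (k : Fin n → Fin n → ℝ) (hB : condB k) {r a b : Fin n} {la lb : List (Fin n)}
    (hca : List.Chain (stepR k) r la) (hla : (r :: la).getLast (List.cons_ne_nil r la) = a)
    (hcb : List.Chain (stepR k) r lb) (hlb : (r :: lb).getLast (List.cons_ne_nil r lb) = b)
    (hba : 0 < k b a) (hab : 0 < k a b)
    (hrb : Relation.ReflTransGen (stepR k) b r) :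
    cp' k (r :: la) * k b a * cp' (flip k) (r :: lb)
      = cp' (flip k) (r :: la) * k a b * cp' k (r :: lb) := by
  cases lb with
  | nil =>
    have hbr : b = r := by simpa using hlb.symm
    rw [hbr] at hba hab ⊢
    obtain ⟨_, _, c3⟩ := BC k hB r la hca (by rw [hla]; exact hba)
    rw [hla] at c3
    have e1 : cp' (flip k) ([r] : List (Fin n)) = 1 := rfl
    have e2 : cp' k ([r] : List (Fin n)) = 1 := rfl
    rw [e1, e2, mul_one, mul_one]
    exact c3
  | cons b0 tb =>
    set M : List (Fin n) := r :: b0 :: tb with hM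
    have hMne : M ≠ [] := by simp [hM]
    have hrev : List.Chain' (fun u v => 0 < k u v) M := rev_path k hB hcb hlb hrb
    have hQch : List.Chain' (stepR k) M.reverse := by
      apply List.isChain_reverse.mpr
      exact hrev
    have hQne : M.reverse ≠ [] := by simp [hM]
    have hQlast : M.reverse.getLast hQne = r := by
      rw [List.getLast_reverse]
      rfl
    have hQeq : M.reverse = M.reverse.dropLast ++ [r] := by
      conv_lhs => rw [← List.dropLast_append_getLast hQne]
      rw [hQlast]
    set D := M.reverse.dropLast with hD
    have hDne : D ≠ [] := by
      apply List.ne_nil_of_length_pos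
      rw [hD, List.length_dropLast, List.length_reverse]
      simp [hM]
    have hDhead : D.head hDne = b := by
      have h1 : M.reverse.head hQne = b := by
        rw [List.head_reverse]
        exact hlb
      calc D.head hDne = (D ++ [r]).head (by simp [hDne]) := (head_append_left hDne _).symm
        _ = M.reverse.head hQne := (head_congr' hQeq hQne (by simp [hDne])).symm
        _ = b := h1
    -- the composite cycle
    have hCch : List.Chain' (stepR k) ((r :: la) ++ D) := by
      apply List.isChain_append.mpr
      refine ⟨hca, hQch.prefix (hQeq ▸ List.prefix_append D [r]), ?_⟩
      intro u hu v hv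
      rw [List.getLast?_eq_getLast (List.cons_ne_nil _ _), Option.mem_def,
        Option.some.injEq] at hu
      subst hu
      rw [List.head?_eq_head hDne, Option.mem_def, Option.some.injEq] at hv
      subst hv
      show 0 < k (D.head hDne) ((r :: la).getLast _)
      rw [hDhead, hla]
      exact hba
    have hclose : 0 < k r (D.getLast hDne) := by
      have hc := hQch
      rw [hQeq] at hc
      have h3 := (List.isChain_append.mp hc).2.2
      exact h3 (D.getLast hDne) (by rw [List.getLast?_eq_getLast hDne]; rfl) r rfl
    -- apply BC to the composite cycle
    have hCeq : (r :: la) ++ D = r :: (la ++ D) := by simp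
    have hCne : la ++ D ≠ [] := by simp [hDne]
    have hCgl : (r :: (la ++ D)).getLast (List.cons_ne_nil _ _) = D.getLast hDne := by
      rw [← List.getLast_congr (by simp) _ hCeq, List.getLast_append_of_ne_nil _ hDne]
    obtain ⟨_, _, c3⟩ := BC k hB r (la ++ D) (hCeq ▸ hCch) (by rw [hCgl]; exact hclose)
    rw [hCgl] at c3
    -- compute the pieces
    have eD1 : cp' k ((r :: la) ++ D) = cp' k (r :: la) * k b a * cp' k D := by
      rw [cp'_append k _ _ (List.cons_ne_nil _ _) hDne, hDhead, hla]
    have eD2 : cp' (flip k) ((r :: la) ++ D) = cp' (flip k) (r :: la) * k a b * cp' (flip k) D := by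
      rw [cp'_append (flip k) _ _ (List.cons_ne_nil _ _) hDne, hDhead, hla]
      rfl
    have eQ1 : cp' k D * k r (D.getLast hDne) = cp' (flip k) M := by
      have := cp'_append k D [r] hDne (List.cons_ne_nil _ _)
      rw [← hQeq] at this
      rw [cp'_reverse] at this
      have e3 : cp' k ([r] : List (Fin n)) = 1 := rfl
      have e5 : ([r] : List (Fin n)).head (List.cons_ne_nil _ _) = r := rfl
      rw [e3, mul_one, e5] at this
      exact this.symm
    have eQ2 : cp' (flip k) D * k (D.getLast hDne) r = cp' k M := by
      have := cp'_append (flip k) D [r] hDne (List.cons_ne_nil _ _)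
      rw [← hQeq] at this
      rw [cp'_reverse] at this
      have e3 : cp' (flip k) ([r] : List (Fin n)) = 1 := rfl
      have e4 : cp' (flip (flip k)) M = cp' k M := rfl
      have e5 : ([r] : List (Fin n)).head (List.cons_ne_nil _ _) = r := rfl
      rw [e3, mul_one, e4, e5] at this
      have e6 : flip k r (D.getLast hDne) = k (D.getLast hDne) r := rfl
      rw [e6] at this
      exact this.symm
    rw [hCeq] at eD1 eD2
    rw [eD1, eD2] at c3
    -- c3 : cp' k (r::la) * k b a * cp' k D * k r c = cp' flip (r::la) * k a b * cp' flip D * k c r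
    show cp' k (r :: la) * k b a * cp' (flip k) M = cp' (flip k) (r :: la) * k a b * cp' k M
    rw [← eQ1, ← eQ2]
    linear_combination c3

lemma exists_wh (k : Fin n → Fin n → ℝ) (hB : condB k) :
    ∃ (w : Fin n → ℝ) (h : Fin n → ℕ), (∀ i, 0 < w i) ∧
      (∀ i j : Fin n, 0 < k i j → 0 < k j i → h i = h j ∧ k i j * w j = k j i * w i) ∧
      (∀ i j : Fin n, 0 < k i j → k j i = 0 → h i < h j) := by
  classical
  set R : Fin n → Fin n → Prop := Relation.ReflTransGen (stepR k) with hR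
  have hRtrans : ∀ {a b c : Fin n}, R a b → R b c → R a c :=
    fun h1 h2 => Relation.ReflTransGen.trans h1 h2
  have hcls_ne : ∀ i : Fin n, (Finset.univ.filter
      (fun x => R i x ∧ R x i)).Nonempty :=
    fun i => ⟨i, by
      simp only [Finset.mem_filter, Finset.mem_univ, true_and]
      exact ⟨Relation.ReflTransGen.refl, Relation.ReflTransGen.refl⟩⟩
  set rep : Fin n → Fin n := fun i =>
    (Finset.univ.filter (fun x => R i x ∧ R x i)).min' (hcls_ne i) with hrepdef
  have hrep : ∀ i, R i (rep i) ∧ R (rep i) i := by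
    intro i
    have := Finset.min'_mem (Finset.univ.filter (fun x => R i x ∧ R x i)) (hcls_ne i)
    simpa using this
  have hrepeq : ∀ i j, R i j → R j i → rep i = rep j := by
    intro i j hij hji
    have hcl : (Finset.univ.filter (fun x => R i x ∧ R x i))
        = (Finset.univ.filter (fun x => R j x ∧ R x j)) := by
      ext x
      simp only [Finset.mem_filter, Finset.mem_univ, true_and]
      exact ⟨fun hx => ⟨hRtrans hji hx.1, hRtrans hx.2 hij⟩,
        fun hx => ⟨hRtrans hij hx.1, hRtrans hx.2 hji⟩⟩
    have hmc : ∀ (s t : Finset (Fin n)) (hs : s.Nonempty) (ht : t.Nonempty),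
        s = t → s.min' hs = t.min' ht := by
      rintro s t hs ht rfl
      rfl
    exact hmc _ _ _ _ hcl
  have hpath : ∀ i, ∃ l, List.Chain (stepR k) (rep i) l ∧
      ((rep i) :: l).getLast (List.cons_ne_nil _ _) = i :=
    fun i => List.exists_isChain_cons_of_relationReflTransGen (hrep i).2
  choose pl hpl1 hpl2 using hpath
  have hcpfpos : ∀ i, 0 < cp' k (rep i :: pl i) := fun i => cp'_pos (hpl1 i)
  have hcpbpos : ∀ i, 0 < cp' (flip k) (rep i :: pl i) :=
    fun i => cp'_pos (rev_path k hB (hpl1 i) (hpl2 i) (hrep i).1)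
  refine ⟨fun i => cp' k (rep i :: pl i) / cp' (flip k) (rep i :: pl i),
    fun i => ((Finset.univ.filter (fun x => R i x)).card), ?_, ?_, ?_⟩
  · exact fun i => div_pos (hcpfpos i) (hcpbpos i)
  · intro i j hij hji
    have hRji : R j i := Relation.ReflTransGen.single hij
    have hRij : R i j := Relation.ReflTransGen.single hji
    constructor
    · beta_reduce
      have hfil : (Finset.univ.filter (fun x => R i x))
          = (Finset.univ.filter (fun x => R j x)) := by
        ext x
        simp only [Finset.mem_filter, Finset.mem_univ, true_and]
        exact ⟨fun hx => hRtrans hRji hx, fun hx => hRtrans hRij hx⟩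
      rw [hfil]
    · have hri : rep i = rep j := hrepeq i j hRij hRji
      have hcb : List.Chain (stepR k) (rep j) (pl i) := hri ▸ hpl1 i
      have hlb : ((rep j) :: pl i).getLast (List.cons_ne_nil _ _) = i := by
        have e : (rep i :: pl i) = (rep j :: pl i) := by rw [hri]
        rw [← List.getLast_congr _ _ e]
        exact hpl2 i
      have hrb : R i (rep j) := hri ▸ (hrep i).1
      have hkey := key k hB (hpl1 j) (hpl2 j) hcb hlb hij hji hrb
      have d1 : cp' (flip k) (rep j :: pl j) ≠ 0 := ne_of_gt (hcpbpos j)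
      have d2 : cp' (flip k) (rep j :: pl i) ≠ 0 :=
        ne_of_gt (cp'_pos (rev_path k hB hcb hlb hrb))
      beta_reduce
      rw [hri]
      field_simp
      linear_combination hkey
  · intro i j hij hji0
    beta_reduce
    apply Finset.card_lt_card
    have hsub : (Finset.univ.filter (fun x => R i x))
        ⊆ (Finset.univ.filter (fun x => R j x)) := by
      intro x hx
      simp only [Finset.mem_filter, Finset.mem_univ, true_and] at hx ⊢
      exact hRtrans (Relation.ReflTransGen.single hij) hx
    rw [Finset.ssubset_iff_of_subset hsub]
    refine ⟨j, by
      simp only [Finset.mem_filter, Finset.mem_univ, true_and]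
      exact Relation.ReflTransGen.refl, ?_⟩
    simp only [Finset.mem_filter, Finset.mem_univ, true_and]
    intro hRij
    have := no_irrev_cycle k hB hRij hij
    rw [hji0] at this
    exact lt_irrefl 0 this

end LimDB

open LimDB Filter Finset in
/-- A linear kinetic system is a limit of reversible systems with positive
equilibria and detailed balance iff it satisfies the extended form of
detailed balance: every oriented cycle with positive constants is reversible
and satisfies the Wegscheider identity. -/
theorem linear_limit_of_detailed_balance_iff_extended
    (n : ℕ) (k : Fin n → Fin n → ℝ) (hk : ∀ i j : Fin n, i ≠ j → 0 ≤ k i j) :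
    (∃ ks : ℕ → Fin n → Fin n → ℝ,
        (∀ m : ℕ, ∀ i j : Fin n, i ≠ j → 0 < ks m i j) ∧
        (∀ i j : Fin n, i ≠ j →
          Filter.Tendsto (fun m => ks m i j) Filter.atTop (nhds (k i j))) ∧
        (∀ m : ℕ, ∃ p : Fin n → ℝ, (∀ i, 0 < p i) ∧
          ∀ i j : Fin n, i ≠ j → ks m i j * p j = ks m j i * p i)) ↔
      (∀ q : ℕ, ∀ idx : Fin (q + 1) → Fin n,
        (∀ j : Fin (q + 1), 0 < k (idx (j + 1)) (idx j)) →
        (∀ j : Fin (q + 1), 0 < k (idx j) (idx (j + 1))) ∧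
          ∏ j : Fin (q + 1), k (idx (j + 1)) (idx j)
            = ∏ j : Fin (q + 1), k (idx j) (idx (j + 1))) := by
  constructor
  · rintro ⟨ks, hpos, hlim, hdb⟩ q idx hcyc
    classical
    choose p hp hdbp using hdb
    set S : Finset (Fin (q + 1)) := Finset.univ.filter (fun j => idx j ≠ idx (j + 1)) with hS
    have hmemS : ∀ j, j ∈ S ↔ idx j ≠ idx (j + 1) := fun j => by simp [hS]
    have hmemSc : ∀ j, j ∈ Finset.univ.filter (fun j => ¬ idx j ≠ idx (j + 1)) ↔
        idx j = idx (j + 1) := fun j => by simp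
    -- per-m product identity over S
    have step2 : ∀ m, (∏ j ∈ S, ks m (idx (j + 1)) (idx j))
        = ∏ j ∈ S, ks m (idx j) (idx (j + 1)) := by
      intro m
      have hBpos : 0 < ∏ j ∈ S, p m (idx j) :=
        Finset.prod_pos fun j _ => hp m (idx j)
      have hCpos : (0 : ℝ) < ∏ j ∈ Finset.univ.filter (fun j => ¬ idx j ≠ idx (j + 1)),
          p m (idx j) := Finset.prod_pos fun j _ => hp m (idx j)
      have h1 : ∏ j : Fin (q + 1), p m (idx (j + 1)) = ∏ j : Fin (q + 1), p m (idx j) := by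
        have := Equiv.prod_comp (Equiv.addRight (1 : Fin (q + 1))) (fun j => p m (idx j))
        simpa using this
      have e1 := Finset.prod_filter_mul_prod_filter_not Finset.univ
        (fun j => idx j ≠ idx (j + 1)) (fun j => p m (idx (j + 1)))
      have e2 := Finset.prod_filter_mul_prod_filter_not Finset.univ
        (fun j => idx j ≠ idx (j + 1)) (fun j => p m (idx j))
      have ec : (∏ j ∈ Finset.univ.filter (fun j => ¬ idx j ≠ idx (j + 1)),
          p m (idx (j + 1)))
          = ∏ j ∈ Finset.univ.filter (fun j => ¬ idx j ≠ idx (j + 1)), p m (idx j) :=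
        Finset.prod_congr rfl fun j hj => by rw [← (hmemSc j).mp hj]
      have hAB : (∏ j ∈ S, p m (idx (j + 1))) = ∏ j ∈ S, p m (idx j) := by
        apply mul_right_cancel₀ (ne_of_gt hCpos)
        calc (∏ j ∈ S, p m (idx (j + 1)))
              * ∏ j ∈ Finset.univ.filter (fun j => ¬ idx j ≠ idx (j + 1)), p m (idx j)
            = (∏ j ∈ S, p m (idx (j + 1)))
              * ∏ j ∈ Finset.univ.filter (fun j => ¬ idx j ≠ idx (j + 1)),
                p m (idx (j + 1)) := by rw [ec]
          _ = ∏ j : Fin (q + 1), p m (idx (j + 1)) := e1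
          _ = ∏ j : Fin (q + 1), p m (idx j) := h1
          _ = (∏ j ∈ S, p m (idx j))
              * ∏ j ∈ Finset.univ.filter (fun j => ¬ idx j ≠ idx (j + 1)), p m (idx j) :=
            e2.symm
      have hprodeq : ∏ j ∈ S, (ks m (idx (j + 1)) (idx j) * p m (idx j))
          = ∏ j ∈ S, (ks m (idx j) (idx (j + 1)) * p m (idx (j + 1))) :=
        Finset.prod_congr rfl fun j hj => hdbp m _ _ (Ne.symm ((hmemS j).mp hj))
      rw [Finset.prod_mul_distrib, Finset.prod_mul_distrib, hAB] at hprodeq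
      exact mul_right_cancel₀ (ne_of_gt hBpos) hprodeq
    -- limits
    have hfl : Tendsto (fun m => ∏ j ∈ S, ks m (idx (j + 1)) (idx j)) atTop
        (nhds (∏ j ∈ S, k (idx (j + 1)) (idx j))) :=
      tendsto_finset_prod S fun j hj => hlim _ _ (Ne.symm ((hmemS j).mp hj))
    have hbl : Tendsto (fun m => ∏ j ∈ S, ks m (idx j) (idx (j + 1))) atTop
        (nhds (∏ j ∈ S, k (idx j) (idx (j + 1)))) :=
      tendsto_finset_prod S fun j hj => hlim _ _ ((hmemS j).mp hj)
    have hprodS : (∏ j ∈ S, k (idx (j + 1)) (idx j)) = ∏ j ∈ S, k (idx j) (idx (j + 1)) :=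
      tendsto_nhds_unique (hfl.congr step2) hbl
    have hfwdpos : 0 < ∏ j ∈ S, k (idx (j + 1)) (idx j) :=
      Finset.prod_pos fun j _ => hcyc j
    have hSpos : ∀ j ∈ S, 0 < k (idx j) (idx (j + 1)) := by
      intro j hj
      rcases (hk (idx j) (idx (j + 1)) ((hmemS j).mp hj)).lt_or_eq with hlt | heq
      · exact hlt
      · exfalso
        have hz : (∏ j ∈ S, k (idx j) (idx (j + 1))) = 0 :=
          Finset.prod_eq_zero hj heq.symm
        rw [hprodS, hz] at hfwdpos
        exact lt_irrefl 0 hfwdpos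
    constructor
    · intro j
      by_cases hj : idx j = idx (j + 1)
      · have := hcyc j
        rw [hj] at this ⊢
        exact this
      · exact hSpos j ((hmemS j).mpr hj)
    · rw [← Finset.prod_filter_mul_prod_filter_not Finset.univ
        (fun j => idx j ≠ idx (j + 1)) (fun j => k (idx (j + 1)) (idx j)),
        ← Finset.prod_filter_mul_prod_filter_not Finset.univ
        (fun j => idx j ≠ idx (j + 1)) (fun j => k (idx j) (idx (j + 1)))]
      have hc : (∏ j ∈ Finset.univ.filter (fun j => ¬ idx j ≠ idx (j + 1)),
          k (idx (j + 1)) (idx j))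
          = ∏ j ∈ Finset.univ.filter (fun j => ¬ idx j ≠ idx (j + 1)),
            k (idx j) (idx (j + 1)) :=
        Finset.prod_congr rfl fun j hj => by rw [(hmemSc j).mp hj]
      rw [hc, hprodS]
  · intro hBrhs
    classical
    have hB : condB k := hBrhs
    obtain ⟨w, h, hw, hwb, hwi⟩ := exists_wh k hB
    set ε : ℕ → ℝ := fun m => 1 / ((m : ℝ) + 1) with hε
    have hεpos : ∀ m, 0 < ε m := fun m => by positivity
    have hεto : Tendsto ε atTop (nhds 0) := tendsto_one_div_add_atTop_nhds_zero_nat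
    set p : ℕ → Fin n → ℝ := fun m i => w i * ε m ^ h i with hpdef
    have hppos : ∀ m i, 0 < p m i := fun m i => mul_pos (hw i) (pow_pos (hεpos m) _)
    refine ⟨fun m a b => if 0 < k a b then k a b
      else if 0 < k b a then k b a * p m a / p m b else ε m * p m a, ?_, ?_, ?_⟩
    · intro m i j hij
      dsimp only
      split_ifs with h1 h2
      · exact h1
      · exact div_pos (mul_pos h2 (hppos m i)) (hppos m j)
      · exact mul_pos (hεpos m) (hppos m i)
    · intro i j hij
      dsimp only
      by_cases h1 : 0 < k i j
      · simp only [if_pos h1]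
        exact tendsto_const_nhds
      · have hk0 : k i j = 0 := le_antisymm (not_lt.mp h1) (hk i j hij)
        by_cases h2 : 0 < k j i
        · simp only [if_neg h1, if_pos h2]
          have hlt : h j < h i := hwi j i h2 hk0
          have heq : ∀ m, k j i * p m i / p m j
              = (k j i * w i / w j) * ε m ^ (h i - h j) := by
            intro m
            simp only [hpdef]
            have hpow : ε m ^ h i = ε m ^ (h i - h j) * ε m ^ h j := by
              rw [← pow_add]
              congr 1
              omega
            rw [hpow]
            have hwj := (hw j).ne'
            have hεm := (hεpos m).ne'
            field_simp
          rw [hk0]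
          have ht : Tendsto (fun m => (k j i * w i / w j) * ε m ^ (h i - h j)) atTop
              (nhds ((k j i * w i / w j) * 0)) := by
            apply Tendsto.mul tendsto_const_nhds
            simpa [zero_pow (by omega : h i - h j ≠ 0)] using hεto.pow (h i - h j)
          rw [mul_zero] at ht
          exact ht.congr fun m => (heq m).symm
        · have hk0' : k j i = 0 := le_antisymm (not_lt.mp h2) (hk j i hij.symm)
          simp only [if_neg h1, if_neg h2]
          rw [hk0]
          have heq : ∀ m, ε m * p m i = w i * ε m ^ (h i + 1) := by
            intro m
            simp only [hpdef]
            ring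
          have ht : Tendsto (fun m => w i * ε m ^ (h i + 1)) atTop (nhds (w i * 0)) := by
            apply Tendsto.mul tendsto_const_nhds
            simpa [zero_pow (Nat.succ_ne_zero (h i))] using hεto.pow (h i + 1)
          rw [mul_zero] at ht
          exact ht.congr fun m => (heq m).symm
    · intro m
      refine ⟨p m, fun i => hppos m i, ?_⟩
      intro i j hij
      dsimp only
      by_cases h1 : 0 < k i j <;> by_cases h2 : 0 < k j i
      · simp only [if_pos h1, if_pos h2]
        obtain ⟨hh, hd⟩ := hwb i j h1 h2
        simp only [hpdef]
        rw [hh]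
        linear_combination (ε m ^ h j) * hd
      · simp only [if_pos h1, if_neg h2]
        have := (hppos m i).ne'
        field_simp
      · simp only [if_neg h1, if_pos h2]
        have := (hppos m j).ne'
        field_simp
      · simp only [if_neg h1, if_neg h2]
        ring
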